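/- For every ε > 0 there exists δ = δ(ε) > 0 such that every weight w on ℝ with strong dyadic smoothness constant S^{sd}_w ≤ 1+δ has smoothness constant S_w ≤ 1+ε. -/

import Mathlib

open MeasureTheory Set Filter Topology

set_option maxHeartbeats 2000000

/-- Average of `w` over the interval `[a, b)`. -/
noncomputable def avgOn (w : ℝ → ℝ) (a b : ℝ) : ℝ :=
  (b - a)⁻¹ * ∫ x in Set.Ico a b, w x

/-- A weight on `ℝ`: measurable, locally integrable, a.e. positive. -/
def IsWeight (w : ℝ → ℝ) : Prop :=
  Measurable w ∧ MeasureTheory.LocallyIntegrable w ∧ ∀ᵐ x ∂(volume : Measure ℝ), 0 < w x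

/-- Average of `w` over the dyadic interval `[k 2^n, (k+1) 2^n)`. -/
noncomputable def dyadAvg (w : ℝ → ℝ) (n k : ℤ) : ℝ :=
  avgOn w ((k : ℝ) * (2 : ℝ) ^ n) (((k : ℝ) + 1) * (2 : ℝ) ^ n)

/-- The strong dyadic smoothness constant of `w` is at most `S`: for any two adjacent
dyadic intervals `I, J` of equal length, `⟨w⟩_I ≤ S ⟨w⟩_J`. -/
def StrongDyadSmoothLE (w : ℝ → ℝ) (S : ℝ) : Prop :=
  ∀ n k : ℤ, dyadAvg w n k ≤ S * dyadAvg w n (k + 1) ∧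
    dyadAvg w n (k + 1) ≤ S * dyadAvg w n k

/-- The smoothness constant of `w` is at most `S`: for every bounded interval `I`
with halves `I₋, I₊`, both ratios `⟨w⟩_{I₋}/⟨w⟩_{I₊}` and `⟨w⟩_{I₊}/⟨w⟩_{I₋}` are `≤ S`. -/
def SmoothLE (w : ℝ → ℝ) (S : ℝ) : Prop :=
  ∀ a b : ℝ, a < b →
    avgOn w a ((a + b) / 2) ≤ S * avgOn w ((a + b) / 2) b ∧
    avgOn w ((a + b) / 2) b ≤ S * avgOn w a ((a + b) / 2)

section Lemmas

variable {w : ℝ → ℝ}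

lemma w_intOn (hw : IsWeight w) (a b : ℝ) : IntegrableOn w (Set.Ico a b) volume :=
  (hw.2.1.integrableOn_isCompact isCompact_Icc).mono_set Set.Ico_subset_Icc_self

lemma w_nonneg (hw : IsWeight w) : 0 ≤ᵐ[(volume : Measure ℝ)] w :=
  hw.2.2.mono fun _ h => h.le

lemma integ_nonneg (hw : IsWeight w) (a b : ℝ) : 0 ≤ ∫ x in Set.Ico a b, w x :=
  integral_nonneg_of_ae (ae_restrict_of_ae (w_nonneg hw))

lemma avgOn_nonneg (hw : IsWeight w) {a b : ℝ} (hab : a ≤ b) : 0 ≤ avgOn w a b := by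
  unfold avgOn
  exact mul_nonneg (inv_nonneg.mpr (by linarith)) (integ_nonneg hw a b)

lemma dyadAvg_nonneg (hw : IsWeight w) (n k : ℤ) : 0 ≤ dyadAvg w n k := by
  apply avgOn_nonneg hw
  have h2 : (0:ℝ) < (2:ℝ)^n := zpow_pos (by norm_num) n
  nlinarith

lemma integral_split (hw : IsWeight w) {a b c : ℝ} (hab : a ≤ b) (hbc : b ≤ c) :
    ∫ x in Set.Ico a c, w x = (∫ x in Set.Ico a b, w x) + ∫ x in Set.Ico b c, w x := by
  rw [← Set.Ico_union_Ico_eq_Ico hab hbc,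
    setIntegral_union (Set.Ico_disjoint_Ico_same) measurableSet_Ico
      (w_intOn hw a b) (w_intOn hw b c)]

lemma integral_mono_Ico (hw : IsWeight w) {a b c d : ℝ}
    (h : Set.Ico a b ⊆ Set.Ico c d) :
    (∫ x in Set.Ico a b, w x) ≤ ∫ x in Set.Ico c d, w x :=
  setIntegral_mono_set (w_intOn hw c d) (ae_restrict_of_ae (w_nonneg hw))
    (HasSubset.Subset.eventuallyLE h)

lemma dyad_mul (n k : ℤ) :
    (2:ℝ)^n * dyadAvg w n k
      = ∫ x in Set.Ico ((k:ℝ) * (2:ℝ)^n) (((k:ℝ)+1) * (2:ℝ)^n), w x := by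
  have h2 : ((2:ℝ)^n : ℝ) ≠ 0 := (zpow_pos (by norm_num : (0:ℝ) < 2) n).ne'
  unfold dyadAvg avgOn
  rw [show ((k:ℝ)+1) * (2:ℝ)^n - (k:ℝ) * (2:ℝ)^n = (2:ℝ)^n by ring, ← mul_assoc,
    mul_inv_cancel₀ h2, one_mul]

end Lemmas

section Chain

variable {w : ℝ → ℝ} {δ : ℝ}

lemma chain_nat (hw : IsWeight w) (hδ : 0 ≤ δ) (hS : StrongDyadSmoothLE w (1+δ)) (n : ℤ) :
    ∀ (d : ℕ) (k : ℤ), dyadAvg w n (k + d) ≤ (1+δ)^d * dyadAvg w n k ∧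
      dyadAvg w n k ≤ (1+δ)^d * dyadAvg w n (k + d) := by
  intro d
  induction d with
  | zero => intro k; simp
  | succ d ih =>
    intro k
    obtain ⟨h1, h2⟩ := ih (k + 1)
    obtain ⟨g1, g2⟩ := hS n k
    have hpow : (0:ℝ) ≤ (1+δ)^d := by positivity
    constructor
    · have e : k + ((d:ℤ) + 1) = (k + 1) + d := by ring
      calc dyadAvg w n (k + (d+1 : ℕ))
          = dyadAvg w n ((k+1) + d) := by rw [show (((d:ℕ)+1 : ℕ) : ℤ) = (d:ℤ)+1 by push_cast; ring, e]
        _ ≤ (1+δ)^d * dyadAvg w n (k+1) := h1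
        _ ≤ (1+δ)^d * ((1+δ) * dyadAvg w n k) := by
            exact mul_le_mul_of_nonneg_left g2 hpow
        _ = (1+δ)^(d+1) * dyadAvg w n k := by ring
    · calc dyadAvg w n k
          ≤ (1+δ) * dyadAvg w n (k+1) := g1
        _ ≤ (1+δ) * ((1+δ)^d * dyadAvg w n ((k+1) + d)) := by
            exact mul_le_mul_of_nonneg_left h2 (by linarith)
        _ = (1+δ)^(d+1) * dyadAvg w n ((k+1) + d) := by ring
        _ = (1+δ)^(d+1) * dyadAvg w n (k + (d+1 : ℕ)) := by
            rw [show ((((d:ℕ)+1 : ℕ)) : ℤ) = (d:ℤ)+1 by push_cast; ring]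
            ring_nf
end Chain

section Chain2

variable {w : ℝ → ℝ} {δ : ℝ}

lemma chain (hw : IsWeight w) (hδ : 0 ≤ δ) (hS : StrongDyadSmoothLE w (1+δ)) (n : ℤ) (M : ℕ)
    (j k : ℤ) (h₁ : -(M:ℤ) ≤ j - k) (h₂ : j - k ≤ M) :
    dyadAvg w n j ≤ (1+δ)^M * dyadAvg w n k := by
  set d : ℕ := (j - k).natAbs with hd
  have hdM : d ≤ M := by omega
  have hmono : (1+δ)^d ≤ (1+δ)^M := pow_le_pow_right₀ (by linarith) hdM
  have hcase : j = k + (d:ℤ) ∨ k = j + (d:ℤ) := by omega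
  rcases hcase with h | h
  · have := (chain_nat hw hδ hS n d k).1
    rw [← h] at this
    calc dyadAvg w n j ≤ (1+δ)^d * dyadAvg w n k := this
      _ ≤ (1+δ)^M * dyadAvg w n k :=
          mul_le_mul_of_nonneg_right hmono (dyadAvg_nonneg hw n k)
  · have := (chain_nat hw hδ hS n d j).2
    rw [← h] at this
    calc dyadAvg w n j ≤ (1+δ)^d * dyadAvg w n k := this
      _ ≤ (1+δ)^M * dyadAvg w n k :=
          mul_le_mul_of_nonneg_right hmono (dyadAvg_nonneg hw n k)

lemma sumEq (hw : IsWeight w) (n j₀ : ℤ) :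
    ∀ j₁ : ℤ, j₀ ≤ j₁ →
      (∫ x in Set.Ico ((j₀:ℝ) * (2:ℝ)^n) ((j₁:ℝ) * (2:ℝ)^n), w x)
        = ∑ j ∈ Finset.Ico j₀ j₁, (2:ℝ)^n * dyadAvg w n j := by
  refine fun j₁ h => Int.le_induction
    (motive := fun j₁ _ => (∫ x in Set.Ico ((j₀:ℝ) * (2:ℝ)^n) ((j₁:ℝ) * (2:ℝ)^n), w x)
      = ∑ j ∈ Finset.Ico j₀ j₁, (2:ℝ)^n * dyadAvg w n j) ?_ ?_ j₁ h
  · simp [Set.Ico_self]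
  · intro j₁ h ih
    have h2 : (0:ℝ) < (2:ℝ)^n := zpow_pos (by norm_num) n
    have hle1 : (j₀:ℝ) * (2:ℝ)^n ≤ (j₁:ℝ) * (2:ℝ)^n := by
      have : (j₀:ℝ) ≤ j₁ := by exact_mod_cast h
      nlinarith
    have hle2 : (j₁:ℝ) * (2:ℝ)^n ≤ ((j₁ + 1 : ℤ):ℝ) * (2:ℝ)^n := by
      push_cast; nlinarith
    have hins : Finset.Ico j₀ (j₁+1) = insert j₁ (Finset.Ico j₀ j₁) := by
      ext x; simp only [Finset.mem_Ico, Finset.mem_insert]; omega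
    rw [integral_split hw hle1 hle2, ih, hins,
      Finset.sum_insert (by simp)]
    push_cast
    rw [← dyad_mul n j₁]
    ring

end Chain2

section Bounds

variable {w : ℝ → ℝ}

lemma upperB (hw : IsWeight w) (n : ℤ) {B : ℝ} (hB : 0 ≤ B) {c d : ℝ} (hcd : c ≤ d)
    (H : ∀ j : ℤ, c / (2:ℝ)^n - 1 ≤ (j:ℝ) → (j:ℝ) ≤ d / (2:ℝ)^n → dyadAvg w n j ≤ B) :
    (∫ x in Set.Ico c d, w x) ≤ (d - c + 2 * (2:ℝ)^n) * B := by
  set s : ℝ := (2:ℝ)^n with hsdef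
  have hs : (0:ℝ) < s := zpow_pos (by norm_num) n
  set p₀ : ℤ := ⌊c / s⌋ with hp₀
  set p₁ : ℤ := ⌈d / s⌉ with hp₁
  have hcds : c / s ≤ d / s := by gcongr
  have hple : p₀ ≤ p₁ := (Int.floor_mono hcds).trans (Int.floor_le_ceil _)
  have h1 : (p₀:ℝ) * s ≤ c := by
    have := Int.floor_le (c / s)
    calc (p₀:ℝ) * s ≤ (c / s) * s := mul_le_mul_of_nonneg_right this hs.le
      _ = c := div_mul_cancel₀ _ hs.ne'
  have h2 : d ≤ (p₁:ℝ) * s := by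
    have := Int.le_ceil (d / s)
    calc d = (d / s) * s := (div_mul_cancel₀ _ hs.ne').symm
      _ ≤ (p₁:ℝ) * s := mul_le_mul_of_nonneg_right this hs.le
  have hmono : (∫ x in Set.Ico c d, w x) ≤ ∫ x in Set.Ico ((p₀:ℝ)*s) ((p₁:ℝ)*s), w x :=
    integral_mono_Ico hw (Set.Ico_subset_Ico h1 h2)
  rw [sumEq hw n p₀ p₁ hple] at hmono
  have hterm : ∀ j ∈ Finset.Ico p₀ p₁, s * dyadAvg w n j ≤ s * B := by
    intro j hj
    rw [Finset.mem_Ico] at hj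
    have hj1 : c / s - 1 ≤ (j:ℝ) := by
      have : c / s - 1 < (p₀:ℝ) := Int.sub_one_lt_floor _
      have : (p₀:ℝ) ≤ j := by exact_mod_cast hj.1
      linarith [Int.sub_one_lt_floor (c / s), (show ((p₀:ℤ):ℝ) ≤ j by exact_mod_cast hj.1)]
    have hj2 : (j:ℝ) ≤ d / s := by
      have hc : (p₁:ℝ) < d / s + 1 := Int.ceil_lt_add_one _
      have hjp : (j:ℝ) ≤ (p₁:ℝ) - 1 := by
        have : j ≤ p₁ - 1 := by omega
        exact_mod_cast this
      linarith
    exact mul_le_mul_of_nonneg_left (H j hj1 hj2) hs.le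
  have hsum : ∑ j ∈ Finset.Ico p₀ p₁, s * dyadAvg w n j
      ≤ ((p₁ - p₀).toNat : ℝ) * (s * B) := by
    calc ∑ j ∈ Finset.Ico p₀ p₁, s * dyadAvg w n j
        ≤ ∑ _j ∈ Finset.Ico p₀ p₁, s * B := Finset.sum_le_sum hterm
      _ = ((p₁ - p₀).toNat : ℝ) * (s * B) := by
          rw [Finset.sum_const, Int.card_Ico, nsmul_eq_mul]
  have hcard : ((p₁ - p₀).toNat : ℝ) * s ≤ d - c + 2 * s := by
    have ht : (((p₁ - p₀).toNat : ℤ) : ℝ) = (p₁:ℝ) - p₀ := by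
      rw [Int.toNat_of_nonneg (by omega)]; push_cast; ring
    have h3 : (p₁:ℝ) < d / s + 1 := Int.ceil_lt_add_one _
    have h4 : c / s - 1 < (p₀:ℝ) := Int.sub_one_lt_floor _
    have h5 : ((p₁:ℝ) - p₀) * s ≤ d - c + 2 * s := by
      have h6 : (p₁:ℝ) - p₀ ≤ (d - c) / s + 2 := by
        have : d / s - c / s = (d - c)/s := by ring
        linarith
      calc ((p₁:ℝ) - p₀) * s ≤ ((d - c)/s + 2) * s := mul_le_mul_of_nonneg_right h6 hs.le
        _ = d - c + 2 * s := by field_simp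
    calc ((p₁ - p₀).toNat : ℝ) * s = ((p₁:ℝ) - p₀) * s := by
          rw [show ((p₁ - p₀).toNat : ℝ) = (((p₁ - p₀).toNat : ℤ) : ℝ) by push_cast; ring, ht]
      _ ≤ d - c + 2 * s := h5
  calc (∫ x in Set.Ico c d, w x) ≤ ((p₁ - p₀).toNat : ℝ) * (s * B) := hmono.trans hsum
    _ = (((p₁ - p₀).toNat : ℝ) * s) * B := by ring
    _ ≤ (d - c + 2 * s) * B := mul_le_mul_of_nonneg_right hcard hB

lemma lowerB (hw : IsWeight w) (n : ℤ) {A P : ℝ} (hA : 0 ≤ A) (hP : 0 ≤ P) {c d : ℝ}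
    (H : ∀ j : ℤ, c / (2:ℝ)^n - 1 ≤ (j:ℝ) → (j:ℝ) ≤ d / (2:ℝ)^n → A ≤ P * dyadAvg w n j) :
    (d - c - 2 * (2:ℝ)^n) * A ≤ P * ∫ x in Set.Ico c d, w x := by
  set s : ℝ := (2:ℝ)^n with hsdef
  have hs : (0:ℝ) < s := zpow_pos (by norm_num) n
  set j₀ : ℤ := ⌈c / s⌉ with hj₀
  set j₁ : ℤ := ⌊d / s⌋ with hj₁
  have hInt : 0 ≤ ∫ x in Set.Ico c d, w x := integ_nonneg hw c d
  have h3 : (j₀:ℝ) < c / s + 1 := Int.ceil_lt_add_one _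
  have h4 : d / s - 1 < (j₁:ℝ) := Int.sub_one_lt_floor _
  rcases le_or_gt j₀ j₁ with hle | hlt
  · have h1 : c ≤ (j₀:ℝ) * s := by
      have := Int.le_ceil (c / s)
      calc c = (c / s) * s := (div_mul_cancel₀ _ hs.ne').symm
        _ ≤ (j₀:ℝ) * s := mul_le_mul_of_nonneg_right this hs.le
    have h2 : (j₁:ℝ) * s ≤ d := by
      have := Int.floor_le (d / s)
      calc (j₁:ℝ) * s ≤ (d / s) * s := mul_le_mul_of_nonneg_right this hs.le
        _ = d := div_mul_cancel₀ _ hs.ne'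
    have hmono : (∫ x in Set.Ico ((j₀:ℝ)*s) ((j₁:ℝ)*s), w x) ≤ ∫ x in Set.Ico c d, w x :=
      integral_mono_Ico hw (Set.Ico_subset_Ico h1 h2)
    have hterm : ∀ j ∈ Finset.Ico j₀ j₁, s * A ≤ P * (s * dyadAvg w n j) := by
      intro j hj
      rw [Finset.mem_Ico] at hj
      have hb1 : c / s - 1 ≤ (j:ℝ) := by
        have : (j₀:ℝ) ≤ j := by exact_mod_cast hj.1
        have := Int.le_ceil (c / s)
        linarith [Int.le_ceil (c / s)]
      have hb2 : (j:ℝ) ≤ d / s := by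
        have hjp : (j:ℝ) ≤ (j₁:ℝ) - 1 := by
          have : j ≤ j₁ - 1 := by omega
          exact_mod_cast this
        have := Int.floor_le (d / s)
        linarith
      have := mul_le_mul_of_nonneg_left (H j hb1 hb2) hs.le
      calc s * A ≤ s * (P * dyadAvg w n j) := this
        _ = P * (s * dyadAvg w n j) := by ring
    have hsum : ((j₁ - j₀).toNat : ℝ) * (s * A)
        ≤ P * ∫ x in Set.Ico ((j₀:ℝ)*s) ((j₁:ℝ)*s), w x := by
      rw [sumEq hw n j₀ j₁ hle, Finset.mul_sum]
      calc ((j₁ - j₀).toNat : ℝ) * (s * A)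
          = ∑ _j ∈ Finset.Ico j₀ j₁, s * A := by
            rw [Finset.sum_const, Int.card_Ico, nsmul_eq_mul]
        _ ≤ ∑ j ∈ Finset.Ico j₀ j₁, P * (s * dyadAvg w n j) := Finset.sum_le_sum hterm
    have hcard : d - c - 2 * s ≤ ((j₁ - j₀).toNat : ℝ) * s := by
      have ht : ((j₁ - j₀).toNat : ℝ) = (j₁:ℝ) - j₀ := by
        rw [show ((j₁ - j₀).toNat : ℝ) = (((j₁ - j₀).toNat : ℤ) : ℝ) by push_cast; ring,
          Int.toNat_of_nonneg (by omega)]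
        push_cast; ring
      rw [ht]
      have h6 : (d - c) / s - 2 ≤ (j₁:ℝ) - j₀ := by
        have : (d - c)/s = d / s - c / s := by ring
        linarith
      calc d - c - 2 * s = ((d - c)/s - 2) * s := by field_simp
        _ ≤ ((j₁:ℝ) - j₀) * s := mul_le_mul_of_nonneg_right h6 hs.le
    calc (d - c - 2 * s) * A ≤ (((j₁ - j₀).toNat : ℝ) * s) * A :=
          mul_le_mul_of_nonneg_right hcard hA
      _ = ((j₁ - j₀).toNat : ℝ) * (s * A) := by ring
      _ ≤ P * ∫ x in Set.Ico ((j₀:ℝ)*s) ((j₁:ℝ)*s), w x := hsum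
      _ ≤ P * ∫ x in Set.Ico c d, w x := mul_le_mul_of_nonneg_left hmono hP
  · -- degenerate: interval shorter than 2s
    have hj : (j₁:ℝ) ≤ (j₀:ℝ) - 1 := by
      have : j₁ ≤ j₀ - 1 := by omega
      exact_mod_cast this
    have hdc : d - c < 2 * s := by
      have : d / s - 1 < c / s + 1 - 1 + 1 := by linarith
      have hd : d / s < c / s + 2 := by linarith
      have e : (d - c) / s < 2 := by
        have e : (d - c)/s = d / s - c / s := by ring
        rw [e]; linarith
      have := (div_lt_iff₀ hs).mp e
      linarith
    have : (d - c - 2 * s) * A ≤ 0 := mul_nonpos_of_nonpos_of_nonneg (by linarith) hA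
    exact this.trans (mul_nonneg hP hInt)

end Bounds

lemma finalArith (X Y A P l s τ ε' ε Nr : ℝ)
    (hU : l * X ≤ (l + 2*s) * (P * A)) (hL : (l - 2*s) * A ≤ P * (l * Y))
    (hP : P * P = 1 + τ) (hPpos : 0 < P) (hA : 0 ≤ A) (hY : 0 ≤ Y)
    (hs : 0 < s) (hsN : Nr * s ≤ l) (hN3 : 3 ≤ Nr) (hNε : 40 ≤ Nr * ε')
    (hτ : τ = ε'/4) (hε1 : 0 < ε') (hε2 : ε' ≤ 1) (hε3 : ε' ≤ ε) : X ≤ (1 + ε) * Y := by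
  have hl : 0 < l := lt_of_lt_of_le (by nlinarith) hsN
  have hl2s : 0 < l - 2*s := by nlinarith
  have key : 40 * s ≤ l * ε' := by nlinarith [mul_le_mul_of_nonneg_right hsN hε1.le]
  have h3 : (l + 2*s) * (1 + τ) ≤ (1 + ε') * (l - 2*s) := by nlinarith
  have h1 : (l - 2*s) * (l * X) ≤ (l - 2*s) * ((l + 2*s) * (P * A)) :=
    mul_le_mul_of_nonneg_left hU hl2s.le
  have h2 : (l + 2*s) * P * ((l - 2*s) * A) ≤ (l + 2*s) * P * (P * (l * Y)) :=
    mul_le_mul_of_nonneg_left hL (by positivity)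
  have h4 : (l - 2*s) * (l * X) ≤ (l + 2*s) * (1 + τ) * (l * Y) := by
    calc (l - 2*s) * (l * X) ≤ (l - 2*s) * ((l + 2*s) * (P * A)) := h1
      _ = (l + 2*s) * P * ((l - 2*s) * A) := by ring
      _ ≤ (l + 2*s) * P * (P * (l * Y)) := h2
      _ = (l + 2*s) * (P * P) * (l * Y) := by ring
      _ = (l + 2*s) * (1 + τ) * (l * Y) := by rw [hP]
  have h5 : (l + 2*s) * (1 + τ) * (l * Y) ≤ (1 + ε') * (l - 2*s) * (l * Y) :=
    mul_le_mul_of_nonneg_right h3 (by positivity)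
  have h6 : (l - 2*s) * (l * X) ≤ (l - 2*s) * (l * ((1 + ε) * Y)) := by
    nlinarith [mul_nonneg (mul_nonneg hl2s.le (mul_nonneg hl.le hY)) (sub_nonneg.mpr hε3)]
  have hpos : (0:ℝ) < (l - 2*s) * l := by positivity
  nlinarith [h6]

theorem statement5 (ε : ℝ) (hε : 0 < ε) :
    ∃ δ : ℝ, 0 < δ ∧
      ∀ w : ℝ → ℝ, IsWeight w → StrongDyadSmoothLE w (1 + δ) → SmoothLE w (1 + ε) := by
  set ε' : ℝ := min ε 1 with hε'def
  have hε'pos : 0 < ε' := lt_min hε one_pos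
  have hε'1 : ε' ≤ 1 := min_le_right _ _
  have hε'ε : ε' ≤ ε := min_le_left _ _
  set N : ℕ := max 3 ⌈(40:ℝ)/ε'⌉₊ with hNdef
  have hN3 : (3:ℕ) ≤ N := le_max_left _ _
  have hNpos : (0:ℝ) < (N:ℝ) := by
    have : (3:ℕ) ≤ N := hN3
    exact_mod_cast lt_of_lt_of_le (by norm_num) this
  have hN40 : (40:ℝ) ≤ (N:ℝ) * ε' := by
    have h1 : (40:ℝ)/ε' ≤ (⌈(40:ℝ)/ε'⌉₊ : ℝ) := Nat.le_ceil _
    have h2 : (⌈(40:ℝ)/ε'⌉₊ : ℝ) ≤ (N:ℝ) := by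
      exact_mod_cast le_max_right 3 ⌈(40:ℝ)/ε'⌉₊
    have := (div_le_iff₀ hε'pos).mp (h1.trans h2)
    linarith
  set M : ℕ := 4*N + 2 with hMdef
  set τ : ℝ := ε'/4 with hτdef
  have hτpos : 0 < τ := by positivity
  set θ : ℝ := (((2*M : ℕ) : ℝ))⁻¹ with hθdef
  have hθpos : 0 < θ := by
    have : (0:ℕ) < 2*M := by omega
    rw [hθdef]
    positivity
  set δ : ℝ := (1+τ) ^ θ - 1 with hδdef
  have h1τ : (0:ℝ) < 1 + τ := by linarith
  have hδpos : 0 < δ := by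
    rw [hδdef, sub_pos]
    rw [Real.one_lt_rpow_iff_of_pos h1τ]
    exact Or.inl ⟨by linarith, hθpos⟩
  have h1δ : (1:ℝ) + δ = (1+τ)^θ := by rw [hδdef]; ring
  have hPP : ((1:ℝ)+δ)^M * (1+δ)^M = 1 + τ := by
    rw [h1δ, ← pow_add, ← Real.rpow_natCast ((1+τ)^θ) (M+M), ← Real.rpow_mul h1τ.le]
    have e : θ * ((M + M : ℕ) : ℝ) = 1 := by
      rw [hθdef]
      have h2M : (((2*M : ℕ)) : ℝ) ≠ 0 := by
        have : (0:ℕ) < 2*M := by omega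
        exact_mod_cast this.ne'
      rw [show (((M + M : ℕ)) : ℝ) = ((2*M : ℕ) : ℝ) by push_cast; ring]
      exact inv_mul_cancel₀ h2M
    rw [e, Real.rpow_one]
  refine ⟨δ, hδpos, ?_⟩
  intro w hw hS a b hab
  have hδ0 : 0 ≤ δ := hδpos.le
  set m : ℝ := (a+b)/2 with hmdef
  set l : ℝ := (b-a)/2 with hldef
  have hl : 0 < l := by rw [hldef]; linarith
  have ham : a ≤ m := by rw [hmdef]; linarith
  have hmb : m ≤ b := by rw [hmdef]; linarith
  have hma : m - a = l := by rw [hmdef, hldef]; ring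
  have hbm : b - m = l := by rw [hmdef, hldef]; ring
  set n : ℤ := Int.log 2 (l / (N:ℝ)) with hndef
  set s : ℝ := (2:ℝ)^n with hsdef
  have hs : (0:ℝ) < s := zpow_pos (by norm_num) n
  have hlN : (0:ℝ) < l / (N:ℝ) := by positivity
  have hs1 : s ≤ l / (N:ℝ) := by
    rw [hsdef, hndef]
    exact_mod_cast Int.zpow_log_le_self (by norm_num : 1 < 2) hlN
  have hs2 : l / (N:ℝ) < 2 * s := by
    have h := Int.lt_zpow_succ_log_self (by norm_num : 1 < 2) (l / (N:ℝ))
    rw [hsdef, hndef]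
    have e : ((2:ℕ):ℝ) ^ (Int.log 2 (l / (N:ℝ)) + 1)
        = 2 * (2:ℝ) ^ (Int.log 2 (l / (N:ℝ))) := by
      rw [zpow_add_one₀ (by norm_num : ((2:ℕ):ℝ) ≠ 0)]
      push_cast
      ring
    calc l / (N:ℝ) < ((2:ℕ):ℝ) ^ (Int.log 2 (l / (N:ℝ)) + 1) := h
      _ = 2 * (2:ℝ) ^ (Int.log 2 (l / (N:ℝ))) := e
  set r : ℤ := ⌊a / s⌋ with hrdef
  set A : ℝ := dyadAvg w n r with hAdef
  set P : ℝ := (1+δ)^M with hPdef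
  have hA : 0 ≤ A := dyadAvg_nonneg hw n r
  have hPpos : 0 < P := by rw [hPdef]; positivity
  -- index control
  have HH : ∀ c d : ℝ, a ≤ c → d ≤ b → ∀ j : ℤ, c/s - 1 ≤ (j:ℝ) → (j:ℝ) ≤ d/s →
      dyadAvg w n j ≤ P * A ∧ A ≤ P * dyadAvg w n j := by
    intro c d hac hdb j hj1 hj2
    have hacs : a/s ≤ c/s := by gcongr
    have hdbs : d/s ≤ b/s := by gcongr
    have hj1' : a/s - 1 ≤ (j:ℝ) := by linarith
    have hj2' : (j:ℝ) ≤ b/s := by linarith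
    have hr1 : (r:ℝ) ≤ a/s := Int.floor_le _
    have hr2 : a/s - 1 < (r:ℝ) := Int.sub_one_lt_floor _
    have hbdiv : b/s - a/s = 2*l/s := by
      rw [show b - a = 2*l from by rw [hldef]; ring] at *
      field_simp
      linarith [show b - a = 2*l from by rw [hldef]; ring]
    have h2l : 2*l/s < 4*(N:ℝ) := by
      rw [div_lt_iff₀ hs]
      have := (div_lt_iff₀ hNpos).mp hs2
      nlinarith
    have hup : (j:ℝ) - (r:ℝ) < 4*(N:ℝ) + 1 := by
      have : (j:ℝ) ≤ a/s + 2*l/s := by linarith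
      linarith
    have hlo : (-1:ℝ) ≤ (j:ℝ) - (r:ℝ) := by linarith
    have hupz : j - r ≤ (M:ℤ) := by
      have : (j:ℝ) - (r:ℝ) < ((4*N + 1 : ℤ):ℝ) := by push_cast; linarith
      have h' : ((j - r : ℤ):ℝ) < ((4*N + 1 : ℤ):ℝ) := by push_cast; push_cast at this; linarith
      have : j - r < 4*(N:ℤ) + 1 := by exact_mod_cast h'
      omega
    have hloz : -(M:ℤ) ≤ j - r := by
      have h' : ((-1 : ℤ):ℝ) ≤ ((j - r : ℤ):ℝ) := by push_cast; linarith
      have : (-1:ℤ) ≤ j - r := by exact_mod_cast h'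
      omega
    constructor
    · exact chain hw hδ0 hS n M j r hloz hupz
    · exact chain hw hδ0 hS n M r j (by omega) (by omega)
  have hPA : 0 ≤ P * A := mul_nonneg hPpos.le hA
  have U1 := upperB hw n hPA ham (fun j h1 h2 => (HH a m le_rfl hmb j h1 h2).1)
  have L1 := lowerB hw n hA hPpos.le (c := a) (d := m)
    (fun j h1 h2 => (HH a m le_rfl hmb j h1 h2).2)
  have U2 := upperB hw n hPA hmb (fun j h1 h2 => (HH m b ham le_rfl j h1 h2).1)
  have L2 := lowerB hw n hA hPpos.le (c := m) (d := b)
    (fun j h1 h2 => (HH m b ham le_rfl j h1 h2).2)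
  rw [hma] at U1 L1
  rw [hbm] at U2 L2
  set X : ℝ := avgOn w a m with hXdef
  set Y : ℝ := avgOn w m b with hYdef
  have hX0 : 0 ≤ X := avgOn_nonneg hw ham
  have hY0 : 0 ≤ Y := avgOn_nonneg hw hmb
  have hlX : l * X = ∫ x in Set.Ico a m, w x := by
    rw [hXdef]
    unfold avgOn
    rw [hma, ← mul_assoc, mul_inv_cancel₀ hl.ne', one_mul]
  have hlY : l * Y = ∫ x in Set.Ico m b, w x := by
    rw [hYdef]
    unfold avgOn
    rw [hbm, ← mul_assoc, mul_inv_cancel₀ hl.ne', one_mul]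
  rw [← hlX] at U1 L1
  rw [← hlY] at U2 L2
  have hsN : (N:ℝ) * s ≤ l := by
    have := (le_div_iff₀ hNpos).mp hs1
    linarith
  have hN3R : (3:ℝ) ≤ (N:ℝ) := by exact_mod_cast hN3
  constructor
  · exact finalArith X Y A P l s τ ε' ε (N:ℝ) U1 L2 hPP hPpos hA hY0 hs hsN hN3R hN40
      hτdef hε'pos hε'1 hε'ε
  · exact finalArith Y X A P l s τ ε' ε (N:ℝ) U2 L1 hPP hPpos hA hX0 hs hsN hN3R hN40
      hτdef hε'pos hε'1 hε'ε
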